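/- Let n ≥ 4, i ≥ 3 and k ≥ 1 with i + k ≤ n − 1. Let G be the graph obtained from the cycle C_n = v_1 v_2 … v_n v_1 by adding the k chords {v_1, v_i}, {v_1, v_{i+1}}, …, {v_1, v_{i+k−1}}. Then γ̄_p(G) = 0; that is, every nonempty subset of vertices of G is a power dominating set. -/

import Mathlib

/-- The closed neighborhood `N[S]` of a set `S` of vertices: `S` together with
all vertices adjacent to a vertex of `S`. -/
def closedNbhdSet {V : Type*} (G : SimpleGraph V) (S : Set V) : Set V :=
  S ∪ {v | ∃ u ∈ S, G.Adj u v}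

/-- The monitored sets `P^i(S)` for power domination:
`P^0(S) = N[S]` and
`P^{i+1}(S) = P^i(S) ∪ { w : {w} = N[v] \ P^i(S) for some v ∈ P^i(S) }`. -/
def monitored {V : Type*} (G : SimpleGraph V) (S : Set V) : ℕ → Set V
  | 0 => closedNbhdSet G S
  | i + 1 => monitored G S i ∪
      {w | ∃ v ∈ monitored G S i,
        (insert v (G.neighborSet v)) \ monitored G S i = {w}}

/-- The zero-forcing sets `Q^i(S)`:
`Q^0(S) = S` and
`Q^{i+1}(S) = Q^i(S) ∪ { w : {w} = N[v] \ Q^i(S) for some v ∈ Q^i(S) }`. -/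
def forced {V : Type*} (G : SimpleGraph V) (S : Set V) : ℕ → Set V
  | 0 => S
  | i + 1 => forced G S i ∪
      {w | ∃ v ∈ forced G S i,
        (insert v (G.neighborSet v)) \ forced G S i = {w}}

/-- `S` is a power dominating set if the monitored sets eventually cover all vertices. -/
def IsPowerDominatingSet {V : Type*} (G : SimpleGraph V) (S : Set V) : Prop :=
  ∃ i, monitored G S i = Set.univ

/-- `S` is a zero forcing set if the forcing process eventually covers all vertices. -/
def IsZeroForcingSet {V : Type*} (G : SimpleGraph V) (S : Set V) : Prop :=
  ∃ i, forced G S i = Set.univ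

/-- The failed power domination number: the maximum cardinality of a set of
vertices that is not a power dominating set. -/
noncomputable def failedPowerDominationNumber {V : Type*} (G : SimpleGraph V) : ℕ :=
  sSup {k | ∃ S : Set V, ¬ IsPowerDominatingSet G S ∧ S.ncard = k}

/-- The failed zero forcing number: the maximum cardinality of a set of
vertices that is not a zero forcing set. -/
noncomputable def failedZeroForcingNumber {V : Type*} (G : SimpleGraph V) : ℕ :=
  sSup {k | ∃ S : Set V, ¬ IsZeroForcingSet G S ∧ S.ncard = k}

/-- The cycle `C_n = v_1 v_2 … v_n v_1` (vertex `v_j` is `(j-1 : Fin n)`) together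
with the `k` chords `{v_1, v_i}, {v_1, v_{i+1}}, …, {v_1, v_{i+k-1}}`. -/
def cycleWithChords (n i k : ℕ) : SimpleGraph (Fin n) :=
  SimpleGraph.fromRel (fun a b =>
    ((a : ℕ) + 1) % n = (b : ℕ) ∨
    ((a : ℕ) = 0 ∧ i ≤ (b : ℕ) + 1 ∧ (b : ℕ) + 2 ≤ i + k))


open Fin.NatCast

lemma monitored_mono_time {V : Type*} (G : SimpleGraph V) (S : Set V) {s t : ℕ} (h : s ≤ t) :
    monitored G S s ⊆ monitored G S t := by
  induction t, h using Nat.le_induction with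
  | base => exact subset_rfl
  | succ t ht ih => exact ih.trans Set.subset_union_left

lemma monitored_force {V : Type*} {G : SimpleGraph V} {S : Set V} {t : ℕ} {v w : V}
    (hv : v ∈ monitored G S t) (hadj : G.Adj v w)
    (hnb : ∀ u, G.Adj v u → u = w ∨ u ∈ monitored G S t) :
    w ∈ monitored G S (t + 1) := by
  by_cases hw : w ∈ monitored G S t
  · exact Set.mem_union_left _ hw
  · refine Set.mem_union_right _ ⟨v, hv, ?_⟩
    ext x
    simp only [Set.mem_diff, Set.mem_insert_iff, SimpleGraph.mem_neighborSet,
      Set.mem_singleton_iff]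
    constructor
    · rintro ⟨hx1, hx2⟩
      rcases hx1 with rfl | hx1
      · exact absurd hv hx2
      · rcases hnb x hx1 with rfl | hx
        · rfl
        · exact absurd hx hx2
    · rintro rfl
      exact ⟨Or.inr hadj, hw⟩

lemma monitored_mono_set {V : Type*} (G : SimpleGraph V) {S T : Set V} (hST : S ⊆ T) (t : ℕ) :
    monitored G S t ⊆ monitored G T t := by
  induction t with
  | zero =>
    intro x hx
    rcases hx with hx | ⟨u, hu, hadj⟩
    · exact Set.mem_union_left _ (hST hx)
    · exact Set.mem_union_right _ ⟨u, hST hu, hadj⟩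
  | succ t ih =>
    intro x hx
    rcases hx with hx | ⟨v, hv, hset⟩
    · exact Set.mem_union_left _ (ih hx)
    · have hxv : x ∈ (insert v (G.neighborSet v)) \ monitored G S t := by
        rw [hset]; rfl
      have hx2 : x ∉ monitored G S t := hxv.2
      have hadj : G.Adj v x := by
        rcases hxv.1 with rfl | h
        · exact absurd hv hx2
        · exact h
      refine monitored_force (ih hv) hadj (fun u hu => ?_)
      by_cases hu2 : u ∈ monitored G S t
      · exact Or.inr (ih hu2)
      · left
        have : u ∈ (insert v (G.neighborSet v)) \ monitored G S t := ⟨Or.inr hu, hu2⟩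
        rw [hset] at this
        exact this

lemma monitored_empty {V : Type*} (G : SimpleGraph V) (t : ℕ) : monitored G ∅ t = ∅ := by
  induction t with
  | zero => simp [monitored, closedNbhdSet]
  | succ t ih => simp [monitored, ih]

lemma cast_eq_of_mod (n : ℕ) [NeZero n] {x y : ℕ} (h : x % n = y % n) :
    (x : Fin n) = (y : Fin n) := by
  apply Fin.ext
  rw [Fin.val_natCast, Fin.val_natCast, h]

lemma fin_cast_ne (n : ℕ) [NeZero n] {x y : ℕ} (h1 : x < y) (h2 : y < x + n) :
    (x : Fin n) ≠ (y : Fin n) := by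
  intro h
  have h3 := congrArg Fin.val h
  rw [Fin.val_natCast, Fin.val_natCast] at h3
  have hd := (Nat.modEq_iff_dvd' h1.le).mp h3
  have := Nat.le_of_dvd (by omega) hd
  omega

lemma fin_eq_cast_of_succ (n : ℕ) [NeZero n] {u : Fin n} {m : ℕ}
    (h : ((u : ℕ) + 1) % n = (m + 1) % n) : u = (m : Fin n) := by
  have h2 : (u : ℕ) % n = m % n := Nat.ModEq.add_right_cancel' 1 h
  apply Fin.ext
  rw [Fin.val_natCast, ← h2, Nat.mod_eq_of_lt u.isLt]

lemma adj_iff (n i k : ℕ) (a b : Fin n) :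
    (cycleWithChords n i k).Adj a b ↔ a ≠ b ∧
      (((a : ℕ) + 1) % n = (b : ℕ) ∨ ((b : ℕ) + 1) % n = (a : ℕ) ∨
       ((a : ℕ) = 0 ∧ i ≤ (b : ℕ) + 1 ∧ (b : ℕ) + 2 ≤ i + k) ∨
       ((b : ℕ) = 0 ∧ i ≤ (a : ℕ) + 1 ∧ (a : ℕ) + 2 ≤ i + k)) := by
  rw [cycleWithChords, SimpleGraph.fromRel_adj]
  tauto

lemma adj_succ (n i k : ℕ) [NeZero n] (hn : 4 ≤ n) (m : ℕ) :
    (cycleWithChords n i k).Adj (m : Fin n) ((m + 1 : ℕ) : Fin n) := by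
  rw [adj_iff]
  refine ⟨fin_cast_ne n (x := m) (y := m + 1) (by omega) (by omega), Or.inl ?_⟩
  rw [Fin.val_natCast, Fin.val_natCast, Nat.mod_add_mod]

lemma sweep_up (n i k : ℕ) [NeZero n] (hn : 4 ≤ n) (S : Set (Fin n)) (l r t d : ℕ)
    (hlr : l < r)
    (hI : ∀ x, l ≤ x → x ≤ r → ((x : ℕ) : Fin n) ∈ monitored (cycleWithChords n i k) S t)
    (hg : ∀ j, j < d → (r + j) % n ≠ 0 ∧
      (i ≤ (r + j) % n + 1 → (r + j) % n + 2 ≤ i + k →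
        (0 : Fin n) ∈ monitored (cycleWithChords n i k) S t)) :
    ∀ x, l ≤ x → x ≤ r + d → ((x : ℕ) : Fin n) ∈ monitored (cycleWithChords n i k) S (t + d) := by
  revert hg
  induction d with
  | zero =>
    intro _ x h1 h2
    exact hI x h1 (by omega)
  | succ d ih =>
    intro hg
    have ih' := ih (fun j hj => hg j (by omega))
    intro x hx1 hx2
    rcases Nat.lt_or_ge x (r + d + 1) with hx | hx
    · exact monitored_mono_time _ _ (by omega : t + d ≤ t + (d + 1)) (ih' x hx1 (by omega))
    · have hxe : x = r + d + 1 := by omega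
      subst hxe
      have hv : (((r + d : ℕ)) : Fin n) ∈ monitored (cycleWithChords n i k) S (t + d) :=
        ih' _ (by omega) (by omega)
      have hadj := adj_succ n i k hn (r + d)
      refine monitored_force hv hadj (fun u hu => ?_)
      rw [adj_iff] at hu
      obtain ⟨hne, hcase⟩ := hu
      rw [Fin.val_natCast] at hcase
      rcases hcase with h1 | h2 | h3 | h4
      · left
        apply Fin.ext
        rw [Fin.val_natCast, ← h1, Nat.mod_add_mod]
      · right
        have e : r + d - 1 + 1 = r + d := by omega
        rw [← e] at h2
        have hu' := fin_eq_cast_of_succ n h2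
        rw [hu']
        exact ih' (r + d - 1) (by omega) (by omega)
      · exact absurd h3.1 (hg d (by omega)).1
      · right
        have hu0 : u = 0 := Fin.ext (by simp [h4.1])
        rw [hu0]
        exact monitored_mono_time _ _ (by omega : t ≤ t + d)
          ((hg d (by omega)).2 h4.2.1 h4.2.2)

lemma sweep_down (n i k : ℕ) [NeZero n] (hn : 4 ≤ n) (S : Set (Fin n)) (l r t d : ℕ)
    (hlr : l < r) (hdl : d ≤ l)
    (hI : ∀ x, l ≤ x → x ≤ r → ((x : ℕ) : Fin n) ∈ monitored (cycleWithChords n i k) S t)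
    (hg : ∀ j, j < d → (l - j) % n ≠ 0 ∧
      (i ≤ (l - j) % n + 1 → (l - j) % n + 2 ≤ i + k →
        (0 : Fin n) ∈ monitored (cycleWithChords n i k) S t)) :
    ∀ x, l - d ≤ x → x ≤ r → ((x : ℕ) : Fin n) ∈ monitored (cycleWithChords n i k) S (t + d) := by
  revert hdl hg
  induction d with
  | zero =>
    intro _ _ x h1 h2
    exact hI x (by omega) h2
  | succ d ih =>
    intro hdl hg
    have ih' := ih (by omega) (fun j hj => hg j (by omega))
    intro x hx1 hx2
    rcases Nat.lt_or_ge (l - d - 1) x with hx | hx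
    · exact monitored_mono_time _ _ (by omega : t + d ≤ t + (d + 1)) (ih' x (by omega) hx2)
    · have hxe : x = l - d - 1 := by omega
      subst hxe
      have hv : (((l - d : ℕ)) : Fin n) ∈ monitored (cycleWithChords n i k) S (t + d) :=
        ih' _ (by omega) (by omega)
      have e : l - d - 1 + 1 = l - d := by omega
      have hadj := (adj_succ n i k hn (l - d - 1)).symm
      rw [e] at hadj
      refine monitored_force hv hadj (fun u hu => ?_)
      rw [adj_iff] at hu
      obtain ⟨hne, hcase⟩ := hu
      rw [Fin.val_natCast] at hcase
      rcases hcase with h1 | h2 | h3 | h4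
      · right
        have hu' : u = ((l - d + 1 : ℕ) : Fin n) := by
          apply Fin.ext
          rw [Fin.val_natCast, ← h1, Nat.mod_add_mod]
        rw [hu']
        exact ih' (l - d + 1) (by omega) (by omega)
      · left
        have h2' : ((u : ℕ) + 1) % n = (l - d - 1 + 1) % n := by
          rw [e]
          exact h2
        exact fin_eq_cast_of_succ n h2'
      · exact absurd h3.1 (hg d (by omega)).1
      · right
        have hu0 : u = 0 := Fin.ext (by simp [h4.1])
        rw [hu0]
        exact monitored_mono_time _ _ (by omega : t ≤ t + d)
          ((hg d (by omega)).2 h4.2.1 h4.2.2)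

lemma singleton_pds (n i k : ℕ) (hn : 4 ≤ n) (hi : 3 ≤ i) (hk : 1 ≤ k)
    (hik : i + k + 1 ≤ n) (v : Fin n) :
    ∃ T, monitored (cycleWithChords n i k) {v} T = Set.univ := by
  haveI : NeZero n := ⟨by omega⟩
  set a := (v : ℕ) with ha
  have hav : a < n := v.isLt
  have hvv : ((a : ℕ) : Fin n) = v := Fin.cast_val_eq_self v
  have hcast_an : ((a + n : ℕ) : Fin n) = v := by
    rw [← hvv]
    exact cast_eq_of_mod n (Nat.add_mod_right a n)
  have hadj_up : (cycleWithChords n i k).Adj v ((a + n + 1 : ℕ) : Fin n) := by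
    have h := adj_succ n i k hn (a + n)
    rwa [hcast_an] at h
  have hadj_dn : (cycleWithChords n i k).Adj v ((a + n - 1 : ℕ) : Fin n) := by
    have h := adj_succ n i k hn (a + n - 1)
    have e : a + n - 1 + 1 = a + n := by omega
    rw [e, hcast_an] at h
    exact h.symm
  have hI0 : ∀ x, a + n - 1 ≤ x → x ≤ a + n + 1 →
      ((x : ℕ) : Fin n) ∈ monitored (cycleWithChords n i k) {v} 0 := by
    intro x h1 h2
    have hx : x = a + n - 1 ∨ x = a + n ∨ x = a + n + 1 := by omega
    rcases hx with rfl | rfl | rfl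
    · exact Set.mem_union_right _ ⟨v, rfl, hadj_dn⟩
    · rw [hcast_an]
      exact Set.mem_union_left _ rfl
    · exact Set.mem_union_right _ ⟨v, rfl, hadj_up⟩
  rcases Nat.lt_or_ge (a + 1) (i + k) with hA | hB
  · -- Case A : a + 2 ≤ i + k.  Sweep down to 0, then up.
    have z0 : i ≤ a + 1 → a + 2 ≤ i + k →
        (0 : Fin n) ∈ monitored (cycleWithChords n i k) {v} 0 := by
      intro h1 h2
      refine Set.mem_union_right _ ⟨v, rfl, ?_⟩
      rw [adj_iff]
      constructor
      · intro h
        have h3 := congrArg Fin.val h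
        simp only [Fin.val_zero] at h3
        omega
      · right; right; right
        refine ⟨by simp, by omega, by omega⟩
    have g1 : ∀ j, j < a - 1 → (a + n - 1 - j) % n ≠ 0 ∧
        (i ≤ (a + n - 1 - j) % n + 1 → (a + n - 1 - j) % n + 2 ≤ i + k →
          (0 : Fin n) ∈ monitored (cycleWithChords n i k) {v} 0) := by
      intro j hj
      have e1 : a + n - 1 - j = n + (a - 1 - j) := by omega
      rw [e1, Nat.add_mod_left, Nat.mod_eq_of_lt (by omega)]
      refine ⟨by omega, fun h1 h2 => z0 (by omega) (by omega)⟩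
    have hdown := sweep_down n i k hn {v} (a + n - 1) (a + n + 1) 0 (a - 1)
      (by omega) (by omega) hI0 g1
    have h0 : (0 : Fin n) ∈ monitored (cycleWithChords n i k) {v} (0 + (a - 1)) := by
      have h := hdown n (by omega) (by omega)
      rwa [Fin.natCast_self] at h
    have g2 : ∀ j, j < n - a - 2 → (a + n + 1 + j) % n ≠ 0 ∧
        (i ≤ (a + n + 1 + j) % n + 1 → (a + n + 1 + j) % n + 2 ≤ i + k →
          (0 : Fin n) ∈ monitored (cycleWithChords n i k) {v} (0 + (a - 1))) := by
      intro j hj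
      have e1 : a + n + 1 + j = n + (a + 1 + j) := by omega
      rw [e1, Nat.add_mod_left, Nat.mod_eq_of_lt (by omega)]
      exact ⟨by omega, fun _ _ => h0⟩
    have hup := sweep_up n i k hn {v} (a + n - 1 - (a - 1)) (a + n + 1) (0 + (a - 1))
      (n - a - 2) (by omega) hdown g2
    refine ⟨0 + (a - 1) + (n - a - 2), ?_⟩
    ext x
    simp only [Set.mem_univ, iff_true]
    have hxlt : (x : ℕ) < n := x.isLt
    have hx := hup ((x : ℕ) + n) (by omega) (by omega)
    rwa [cast_eq_of_mod n (Nat.add_mod_right _ n), Fin.cast_val_eq_self] at hx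
  · -- Case B : i + k ≤ a + 1.  Sweep up to 0, then down.
    have g1 : ∀ j, j < n - 1 - a → (a + n + 1 + j) % n ≠ 0 ∧
        (i ≤ (a + n + 1 + j) % n + 1 → (a + n + 1 + j) % n + 2 ≤ i + k →
          (0 : Fin n) ∈ monitored (cycleWithChords n i k) {v} 0) := by
      intro j hj
      have e1 : a + n + 1 + j = n + (a + 1 + j) := by omega
      rw [e1, Nat.add_mod_left, Nat.mod_eq_of_lt (by omega)]
      refine ⟨by omega, fun h1 h2 => ?_⟩
      omega
    have hup := sweep_up n i k hn {v} (a + n - 1) (a + n + 1) 0 (n - 1 - a)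
      (by omega) hI0 g1
    have h0 : (0 : Fin n) ∈ monitored (cycleWithChords n i k) {v} (0 + (n - 1 - a)) := by
      have h := hup (2 * n) (by omega) (by omega)
      have e : (2 * n) % n = n % n := by
        rw [Nat.mul_mod_left, Nat.mod_self]
      rwa [cast_eq_of_mod n e, Fin.natCast_self] at h
    have g2 : ∀ j, j < a - 1 → (a + n - 1 - j) % n ≠ 0 ∧
        (i ≤ (a + n - 1 - j) % n + 1 → (a + n - 1 - j) % n + 2 ≤ i + k →
          (0 : Fin n) ∈ monitored (cycleWithChords n i k) {v} (0 + (n - 1 - a))) := by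
      intro j hj
      have e1 : a + n - 1 - j = n + (a - 1 - j) := by omega
      rw [e1, Nat.add_mod_left, Nat.mod_eq_of_lt (by omega)]
      exact ⟨by omega, fun _ _ => h0⟩
    have hdown := sweep_down n i k hn {v} (a + n - 1) (a + n + 1 + (n - 1 - a))
      (0 + (n - 1 - a)) (a - 1) (by omega) (by omega) hup g2
    refine ⟨0 + (n - 1 - a) + (a - 1), ?_⟩
    ext x
    simp only [Set.mem_univ, iff_true]
    have hxlt : (x : ℕ) < n := x.isLt
    have hx := hdown ((x : ℕ) + n) (by omega) (by omega)
    rwa [cast_eq_of_mod n (Nat.add_mod_right _ n), Fin.cast_val_eq_self] at hx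

theorem failedPowerDominationNumber_cycleWithChords
    (n i k : ℕ) (hn : 4 ≤ n) (hi : 3 ≤ i) (hk : 1 ≤ k) (hik : i + k + 1 ≤ n) :
    failedPowerDominationNumber (cycleWithChords n i k) = 0 := by
  haveI : NeZero n := ⟨by omega⟩
  have key : ∀ S : Set (Fin n), S.Nonempty →
      IsPowerDominatingSet (cycleWithChords n i k) S := by
    rintro S ⟨v, hv⟩
    obtain ⟨T, hT⟩ := singleton_pds n i k hn hi hk hik v
    refine ⟨T, Set.eq_univ_of_univ_subset ?_⟩
    rw [← hT]
    exact monitored_mono_set _ (Set.singleton_subset_iff.mpr hv) T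
  have hempty : ¬ IsPowerDominatingSet (cycleWithChords n i k) ∅ := by
    rintro ⟨t, ht⟩
    rw [monitored_empty] at ht
    exact absurd (ht ▸ Set.mem_univ (0 : Fin n)) (by simp)
  have hset : {m | ∃ S : Set (Fin n),
      ¬ IsPowerDominatingSet (cycleWithChords n i k) S ∧ S.ncard = m} = {0} := by
    ext m
    simp only [Set.mem_setOf_eq, Set.mem_singleton_iff]
    constructor
    · rintro ⟨S, hS, rfl⟩
      by_contra hm
      exact hS (key S (Set.nonempty_of_ncard_ne_zero hm))
    · rintro rfl
      exact ⟨∅, hempty, Set.ncard_empty _⟩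
  rw [failedPowerDominationNumber, hset, csSup_singleton]
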